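/- Let θ̂_u and θ̂_b' be square-integrable real-valued random variables on a probability space with E[θ̂_u] = θ₀, E[θ̂_b'] = θ₀, Var(θ̂_u) = σ_u² > 0, Var(θ̂_b') = σ_b², Cov(θ̂_u, θ̂_b') = σ_bu, and σ_u² + σ_b² − 2σ_bu > 0. For each k, let θ̂_b⁽ᵏ⁾ = θ̂_b' + μ_k where (μ_k) is a sequence of reals with μ_k → ∞, and define λ̂_k = (σ_u² − σ_bu)/((θ̂_u − θ̂_b⁽ᵏ⁾)² + σ_u² + σ_b² − 2σ_bu) and θ̂_λ̂⁽ᵏ⁾ = λ̂_k·θ̂_b⁽ᵏ⁾ + (1 − λ̂_k)·θ̂_u. Then lim_{k→∞} E[(θ̂_λ̂⁽ᵏ⁾ − θ₀)²] = σ_u², i.e., the mean-squared error of the combination estimator converges to that of the unbiased estimator as the bias grows without bound. -/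

import Mathlib

open MeasureTheory ProbabilityTheory Filter

/-- As the bias `μ_k → ∞`, the MSE of the combination estimator
`θ̂_λ̂⁽ᵏ⁾ = λ̂_k·(θ̂_b' + μ_k) + (1 − λ̂_k)·θ̂_u` converges to `σ_u²`, the MSE of the
unbiased estimator. -/
theorem mse_converges_unbounded_bias
    {Ω : Type*} [MeasurableSpace Ω] (P : Measure Ω) [IsProbabilityMeasure P]
    (θu θb' : Ω → ℝ) (θ₀ σu2 σb2 σbu : ℝ)
    (hθu : MemLp θu 2 P) (hθb' : MemLp θb' 2 P)
    (hEu : ∫ ω, θu ω ∂P = θ₀) (hEb' : ∫ ω, θb' ω ∂P = θ₀)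
    (hVu : variance θu P = σu2) (hσu2pos : 0 < σu2)
    (hVb : variance θb' P = σb2)
    (hCov : ∫ ω, (θu ω - θ₀) * (θb' ω - θ₀) ∂P = σbu)
    (hv : σu2 + σb2 - 2 * σbu > 0)
    (μ : ℕ → ℝ) (hμ : Tendsto μ atTop atTop) :
    Tendsto
      (fun k => ∫ ω,
        (((σu2 - σbu) / ((θu ω - (θb' ω + μ k)) ^ 2 + σu2 + σb2 - 2 * σbu))
            * (θb' ω + μ k)
          + (1 - (σu2 - σbu) / ((θu ω - (θb' ω + μ k)) ^ 2 + σu2 + σb2 - 2 * σbu))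
            * θu ω
          - θ₀) ^ 2 ∂P)
      atTop (nhds σu2) := by
  set c : ℝ := σu2 - σbu with hc
  set v : ℝ := σu2 + σb2 - 2 * σbu with hvdef
  have hv' : (0:ℝ) < v := hv
  have hden : ∀ d : ℝ, (0:ℝ) < d ^ 2 + v := fun d => by positivity
  set M : ℝ := |c| / (2 * Real.sqrt v) with hM
  have hsv : (0:ℝ) < Real.sqrt v := Real.sqrt_pos.mpr hv'
  have hMnn : 0 ≤ M := div_nonneg (abs_nonneg _) (by positivity)
  -- uniform bound on the correction term
  have hbd : ∀ d : ℝ, |c * d / (d ^ 2 + v)| ≤ M := by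
    intro d
    rw [abs_div, abs_of_pos (hden d), hM, div_le_div_iff₀ (hden d) (by positivity)]
    have h1 : Real.sqrt v ^ 2 = v := Real.sq_sqrt hv'.le
    have h2 : |c * d| = |c| * |d| := abs_mul c d
    nlinarith [abs_nonneg c, abs_nonneg d, sq_abs d, sq_nonneg (|d| - Real.sqrt v),
      mul_nonneg (abs_nonneg c) (sq_nonneg (|d| - Real.sqrt v))]
  -- algebraic rewriting of the combination estimator
  have key : ∀ (x y m : ℝ),
      ((c / ((x - (y + m)) ^ 2 + σu2 + σb2 - 2 * σbu)) * (y + m)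
        + (1 - c / ((x - (y + m)) ^ 2 + σu2 + σb2 - 2 * σbu)) * x - θ₀)
      = (x - θ₀) - c * (x - y - m) / ((x - y - m) ^ 2 + v) := by
    intro x y m
    have h0 : (x - (y + m)) ^ 2 + σu2 + σb2 - 2 * σbu = (x - y - m) ^ 2 + v := by
      rw [hvdef]; ring
    rw [h0]
    have hd := (hden (x - y - m)).ne'
    field_simp
    ring
  -- the limit function and its integral
  have hXm : AEStronglyMeasurable θu P := hθu.aestronglyMeasurable
  have hYm : AEStronglyMeasurable θb' P := hθb'.aestronglyMeasurable
  have hXc : MemLp (fun ω => θu ω - θ₀) 2 P := hθu.sub (memLp_const θ₀)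
  have hlimval : ∫ ω, (θu ω - θ₀) ^ 2 ∂P = σu2 := by
    rw [← hVu, variance_eq_integral hXm.aemeasurable, hEu]
  -- dominated convergence
  have main : Tendsto
      (fun k => ∫ ω, ((θu ω - θ₀) - c * (θu ω - θb' ω - μ k)
        / ((θu ω - θb' ω - μ k) ^ 2 + v)) ^ 2 ∂P)
      atTop (nhds (∫ ω, (θu ω - θ₀) ^ 2 ∂P)) := by
    apply tendsto_integral_of_dominated_convergence
      (bound := fun ω => (|θu ω - θ₀| + M) ^ 2)
    · intro k
      have hu : AEMeasurable θu P := hXm.aemeasurable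
      have hy : AEMeasurable θb' P := hYm.aemeasurable
      exact ((((hu.sub aemeasurable_const).sub
        ((aemeasurable_const.mul ((hu.sub hy).sub aemeasurable_const)).div
          ((((hu.sub hy).sub aemeasurable_const).pow aemeasurable_const).add
            aemeasurable_const))).pow (aemeasurable_const : AEMeasurable (fun _ => (2:ℕ)) P))).aestronglyMeasurable
    · have h1 : MemLp (fun ω => |θu ω - θ₀| + M) 2 P := by
        have := hXc.abs
        exact this.add (memLp_const M)
      exact h1.integrable_sq
    · intro k
      filter_upwards with ω
      have ht := hbd (θu ω - θb' ω - μ k)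
      set t := c * (θu ω - θb' ω - μ k) / ((θu ω - θb' ω - μ k) ^ 2 + v) with hts
      have h1 : |t| ≤ M := ht
      rw [Real.norm_eq_abs, abs_of_nonneg (sq_nonneg _)]
      have h2 := abs_nonneg (θu ω - θ₀)
      have h3 := le_abs_self (θu ω - θ₀)
      have h4 := neg_abs_le (θu ω - θ₀)
      have h5 := le_abs_self t
      have h6 := neg_abs_le t
      nlinarith [sq_nonneg (θu ω - θ₀ - t), sq_nonneg (|θu ω - θ₀| + |t|)]
    · filter_upwards with ω
      have hd : Tendsto (fun k => θu ω - θb' ω - μ k) atTop atBot :=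
        tendsto_atBot_add_const_left _ _ (tendsto_neg_atBot_iff.mpr hμ)
      have habs : Tendsto (fun k => |θu ω - θb' ω - μ k|) atTop atTop :=
        tendsto_abs_atBot_atTop.comp hd
      have hg : Tendsto (fun k => c * (θu ω - θb' ω - μ k)
          / ((θu ω - θb' ω - μ k) ^ 2 + v)) atTop (nhds 0) := by
        apply squeeze_zero_norm' (a := fun k => |c| / |θu ω - θb' ω - μ k|)
        · filter_upwards [habs.eventually_ge_atTop 1] with k hk
          set d := θu ω - θb' ω - μ k with hds
          have hdpos : (0:ℝ) < |d| := lt_of_lt_of_le one_pos hk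
          rw [Real.norm_eq_abs, abs_div, abs_of_pos (hden d),
            div_le_div_iff₀ (hden d) hdpos, abs_mul]
          nlinarith [sq_abs d, abs_nonneg c, hv'.le]
        · exact (tendsto_const_nhds.div_atTop habs)
      have := (tendsto_const_nhds (x := θu ω - θ₀) (f := atTop)).sub hg
      simpa using this.pow 2
  rw [hlimval] at main
  apply main.congr
  intro k
  apply integral_congr_ae
  filter_upwards with ω
  rw [key (θu ω) (θb' ω) (μ k)]
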